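/- arXiv:1904.10098 — 2 statements merged into one kernel-verified Lean document; each statement's English description precedes it below -/
import Mathlib

section
/- Let A be an m×m real matrix (m ≥ 1) regarded as the weighted adjacency matrix of a directed graph G on vertices {1,…,m}, where G has an edge from i to j if and only if A_{ij} ≠ 0. For every α > 0, the graph G is acyclic if and only if tr[(I + α (A ∘ A))^m] − m = 0, where A ∘ A denotes the entrywise (Hadamard) square of A and I is the m×m identity matrix. -/
open Matrix Finset

lemma aux_pow_nonneg {m : ℕ} (B : Matrix (Fin m) (Fin m) ℝ) (hB : ∀ i j, 0 ≤ B i j) :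
    ∀ (k : ℕ) (i j : Fin m), 0 ≤ (B ^ k) i j := by
  intro k
  induction k with
  | zero => intro i j; rw [pow_zero, Matrix.one_apply]; split <;> norm_num
  | succ k ih =>
    intro i j
    rw [pow_succ, Matrix.mul_apply]
    exact Finset.sum_nonneg fun l _ => mul_nonneg (ih i l) (hB l j)

lemma aux_entry_to_walk {m : ℕ} (B : Matrix (Fin m) (Fin m) ℝ) :
    ∀ (k : ℕ) (i j : Fin m), (B ^ k) i j ≠ 0 →
      ∃ v : ℕ → Fin m, v 0 = i ∧ v k = j ∧ ∀ t < k, B (v t) (v (t + 1)) ≠ 0 := by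
  intro k
  induction k with
  | zero =>
    intro i j h
    rw [pow_zero, Matrix.one_apply] at h
    have : i = j := by by_contra hij; simp [hij] at h
    exact ⟨fun _ => i, rfl, this, fun t ht => absurd ht (Nat.not_lt_zero t)⟩
  | succ k ih =>
    intro i j h
    rw [pow_succ', Matrix.mul_apply] at h
    obtain ⟨l, -, hl⟩ := Finset.exists_ne_zero_of_sum_ne_zero h
    have h1 : B i l ≠ 0 := left_ne_zero_of_mul hl
    have h2 : (B ^ k) l j ≠ 0 := right_ne_zero_of_mul hl
    obtain ⟨v, hv0, hvk, hve⟩ := ih l j h2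
    refine ⟨fun t => if t = 0 then i else v (t - 1), by simp, by simp [hvk], ?_⟩
    intro t ht
    rcases Nat.eq_zero_or_pos t with rfl | htp
    · simpa [hv0] using h1
    · have ht0 : t ≠ 0 := htp.ne'
      simp only [ht0, if_false, Nat.add_sub_cancel, Nat.succ_ne_zero]
      have h3 := hve (t - 1) (by omega)
      have h4 : t - 1 + 1 = t := by omega
      rwa [h4] at h3

lemma aux_walk_to_entry {m : ℕ} (B : Matrix (Fin m) (Fin m) ℝ) (hB : ∀ i j, 0 ≤ B i j) :
    ∀ (k : ℕ) (v : ℕ → Fin m), (∀ t < k, B (v t) (v (t + 1)) ≠ 0) →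
      0 < (B ^ k) (v 0) (v k) := by
  intro k
  induction k with
  | zero => intro v _; simp [Matrix.one_apply]
  | succ k ih =>
    intro v hv
    rw [pow_succ, Matrix.mul_apply]
    have hterm : 0 < (B ^ k) (v 0) (v k) * B (v k) (v (k + 1)) := by
      refine mul_pos (ih v fun t ht => hv t (by omega)) ?_
      exact lt_of_le_of_ne (hB _ _) (Ne.symm (hv k (by omega)))
    refine Finset.sum_pos' (fun l _ => mul_nonneg (aux_pow_nonneg B hB k _ _) (hB _ _))
      ⟨v k, Finset.mem_univ _, hterm⟩

/-- **Theorem 1 (DAG-GNN acyclicity constraint).**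
Let `A` be an `m × m` real matrix (`m ≥ 1`) regarded as the weighted adjacency matrix of
the directed graph `G` on `{1, …, m}` with an edge from `i` to `j` iff `A i j ≠ 0`.
For every `α > 0`, `G` is acyclic iff `tr[(I + α (A ∘ A))^m] - m = 0`, where `A ∘ A`
is the Hadamard (entrywise) square of `A`. -/
theorem acyclic_iff_trace_pow_hadamard_eq (m : ℕ) (hm : 1 ≤ m)
    (A : Matrix (Fin m) (Fin m) ℝ) (α : ℝ) (hα : 0 < α) :
    (¬ ∃ (k : ℕ) (v : ℕ → Fin m), 1 ≤ k ∧ v k = v 0 ∧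
        ∀ t < k, A (v t) (v (t + 1)) ≠ 0) ↔
      Matrix.trace ((1 + α • (Matrix.hadamard A A)) ^ m) - (m : ℝ) = 0 := by
  set B := Matrix.hadamard A A with hBdef
  have hB : ∀ i j, 0 ≤ B i j := fun i j => mul_self_nonneg (A i j)
  have hBA : ∀ i j, B i j ≠ 0 ↔ A i j ≠ 0 := fun i j => by
    simp [hBdef, Matrix.hadamard_apply, mul_self_ne_zero]
  -- binomial expansion of the trace
  have hexp : Matrix.trace ((1 + α • B) ^ m) - (m : ℝ) =
      ∑ k ∈ Finset.range m, (m.choose k : ℝ) * (α ^ (m - k) * Matrix.trace (B ^ (m - k))) := by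
    have hcomm : Commute (1 : Matrix (Fin m) (Fin m) ℝ) (α • B) := Commute.one_left _
    rw [hcomm.add_pow m, Matrix.trace_sum]
    have hterm : ∀ k, Matrix.trace ((1 : Matrix (Fin m) (Fin m) ℝ) ^ k * (α • B) ^ (m - k) *
        (m.choose k : Matrix (Fin m) (Fin m) ℝ)) =
        (m.choose k : ℝ) * (α ^ (m - k) * Matrix.trace (B ^ (m - k))) := by
      intro k
      rw [one_pow, one_mul, smul_pow, Matrix.trace_mul_comm, ← nsmul_eq_mul,
        ← Nat.cast_smul_eq_nsmul ℝ, Matrix.trace_smul, Matrix.trace_smul, smul_eq_mul, smul_eq_mul]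
    rw [Finset.sum_congr rfl fun k _ => hterm k, Finset.sum_range_succ]
    simp [Nat.choose_self, Matrix.trace_one]
  rw [hexp]
  have hnn : ∀ k ∈ Finset.range m,
      0 ≤ (m.choose k : ℝ) * (α ^ (m - k) * Matrix.trace (B ^ (m - k))) := by
    intro k _
    have htr : 0 ≤ Matrix.trace (B ^ (m - k)) :=
      Finset.sum_nonneg fun i _ => aux_pow_nonneg B hB _ i i
    positivity
  constructor
  · -- acyclic → sum = 0
    intro hnc
    refine Finset.sum_eq_zero fun k hk => ?_
    have hk' : k < m := Finset.mem_range.mp hk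
    have htr : Matrix.trace (B ^ (m - k)) = 0 := by
      refine Finset.sum_eq_zero fun i _ => ?_
      by_contra h
      obtain ⟨v, hv0, hvk, hve⟩ := aux_entry_to_walk B (m - k) i i h
      exact hnc ⟨m - k, v, by omega, hvk.trans hv0.symm,
        fun t ht => (hBA _ _).mp (hve t ht)⟩
    rw [htr]; ring
  · -- sum = 0 → acyclic
    intro hsum
    rintro ⟨k, v, hk1, hvk, hve⟩
    -- shorten the cycle to length ≤ m
    obtain ⟨k', w, hk'1, hk'm, hwk, hwe⟩ :
        ∃ (k' : ℕ) (w : ℕ → Fin m), 1 ≤ k' ∧ k' ≤ m ∧ w k' = w 0 ∧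
          ∀ t < k', A (w t) (w (t + 1)) ≠ 0 := by
      rcases le_or_gt k m with hkm | hkm
      · exact ⟨k, v, hk1, hkm, hvk, hve⟩
      · have : ¬ Function.Injective (fun x : Fin (m + 1) => v x.val) := by
          intro hinj
          have := Fintype.card_le_of_injective _ hinj
          simp at this
        obtain ⟨x, y, hxy, hne⟩ := Function.not_injective_iff.mp this
        wlog hlt : (x : ℕ) < (y : ℕ) generalizing x y
        · exact this y x hxy.symm (Ne.symm hne) (by omega)
        refine ⟨(y : ℕ) - (x : ℕ), fun t => v ((x : ℕ) + t), by omega, by omega, ?_, ?_⟩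
        · simp only [Nat.add_sub_cancel' hlt.le, add_zero]
          exact hxy.symm
        · intro t ht
          have : (x : ℕ) + t < k := by omega
          simpa [Nat.add_assoc] using hve ((x : ℕ) + t) this
    -- get positive trace term, contradiction
    have hpos : 0 < Matrix.trace (B ^ k') := by
      have := aux_walk_to_entry B hB k' w fun t ht => (hBA _ _).mpr (hwe t ht)
      rw [hwk] at this
      refine Finset.sum_pos' (fun i _ => aux_pow_nonneg B hB _ i i)
        ⟨w 0, Finset.mem_univ _, this⟩
    have hkmem : m - k' ∈ Finset.range m := Finset.mem_range.mpr (by omega)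
    have hzero := (Finset.sum_eq_zero_iff_of_nonneg hnn).mp hsum (m - k') hkmem
    have hmk : m - (m - k') = k' := by omega
    rw [hmk] at hzero
    have hcpos : (0 : ℝ) < (m.choose (m - k') : ℝ) := by
      exact_mod_cast Nat.choose_pos (by omega)
    have := mul_pos hcpos (mul_pos (pow_pos hα k') hpos)
    linarith
end

section
/- Let B be an m×m real matrix with all entries nonnegative (m ≥ 1), and let G be the directed graph on vertices {1,…,m} with an edge from i to j if and only if B_{ij} > 0. Then G is acyclic if and only if tr(exp(B)) = m, where exp denotes the matrix exponential. -/
open Matrix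

lemma pow_entry_nonneg {m : ℕ} (B : Matrix (Fin m) (Fin m) ℝ)
    (hB : ∀ i j, 0 ≤ B i j) : ∀ n i j, 0 ≤ (B ^ n) i j := by
  intro n
  induction n with
  | zero => intro i j; simp [Matrix.one_apply]; split <;> norm_num
  | succ n ih =>
    intro i j
    rw [pow_succ, Matrix.mul_apply]
    exact Finset.sum_nonneg fun l _ => mul_nonneg (ih i l) (hB l j)

lemma walk_of_pow_pos {m : ℕ} (B : Matrix (Fin m) (Fin m) ℝ)
    (hB : ∀ i j, 0 ≤ B i j) :
    ∀ n i j, 0 < (B ^ n) i j →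
      ∃ v : ℕ → Fin m, v 0 = i ∧ v n = j ∧ ∀ t < n, 0 < B (v t) (v (t + 1)) := by
  intro n
  induction n with
  | zero =>
    intro i j h
    rw [pow_zero, Matrix.one_apply] at h
    split at h
    · exact ⟨fun _ => i, rfl, by simp_all, by omega⟩
    · norm_num at h
  | succ n ih =>
    intro i j h
    rw [pow_succ, Matrix.mul_apply] at h
    obtain ⟨l, -, hl⟩ := Finset.exists_lt_of_sum_lt (f := fun _ => (0:ℝ)) (by simpa using h)
    have hl1 : 0 < (B ^ n) i l ∧ 0 < B l j := by
      rcases mul_pos_iff.mp hl with h' | h'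
      · exact h'
      · exact absurd h'.1 (not_lt.mpr (pow_entry_nonneg B hB n i l))
    obtain ⟨v, hv0, hvn, hvstep⟩ := ih i l hl1.1
    refine ⟨fun t => if t ≤ n then v t else j, by simpa using hv0, by simp, ?_⟩
    intro t ht
    rcases lt_or_eq_of_le (Nat.lt_succ_iff.mp ht) with h' | h'
    · simpa [h'.le, Nat.succ_le_of_lt h'] using hvstep t h'
    · subst h'
      simpa [hvn] using hl1.2

lemma pow_pos_of_walk {m : ℕ} (B : Matrix (Fin m) (Fin m) ℝ)
    (hB : ∀ i j, 0 ≤ B i j) :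
    ∀ n (v : ℕ → Fin m), (∀ t < n, 0 < B (v t) (v (t + 1))) →
      0 < (B ^ n) (v 0) (v n) := by
  intro n
  induction n with
  | zero => intro v _; simp [Matrix.one_apply_eq]
  | succ n ih =>
    intro v hv
    have h1 : 0 < (B ^ n) (v 0) (v n) := ih v fun t ht => hv t (by omega)
    have h2 : 0 < B (v n) (v (n + 1)) := hv n (by omega)
    rw [pow_succ, Matrix.mul_apply]
    have : 0 < (B ^ n) (v 0) (v n) * B (v n) (v (n + 1)) := mul_pos h1 h2
    calc (0:ℝ) < (B ^ n) (v 0) (v n) * B (v n) (v (n + 1)) := this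
      _ ≤ ∑ l, (B ^ n) (v 0) l * B l (v (n + 1)) :=
        Finset.single_le_sum (f := fun l => (B ^ n) (v 0) l * B l (v (n + 1)))
          (fun l _ => mul_nonneg (pow_entry_nonneg B hB n _ l) (hB l _))
          (Finset.mem_univ _)

/-- For a nonnegative `m × m` real matrix `B` (`m ≥ 1`) with associated directed graph
having an edge from `i` to `j` iff `B i j > 0`: the graph is acyclic iff
`tr (exp B) = m`, where `exp` is the matrix exponential. -/
theorem acyclic_iff_trace_exp_eq (m : ℕ) (hm : 1 ≤ m)
    (B : Matrix (Fin m) (Fin m) ℝ) (hB : ∀ i j, 0 ≤ B i j) :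
    (¬ ∃ (k : ℕ) (v : ℕ → Fin m), 1 ≤ k ∧ v k = v 0 ∧
        ∀ t < k, 0 < B (v t) (v (t + 1))) ↔
      Matrix.trace (NormedSpace.exp B) = (m : ℝ) := by
  have hsum : Summable (fun n : ℕ => ((n.factorial : ℝ))⁻¹ • B ^ n) := by
    letI := Matrix.linftyOpNormedRing (n := Fin m) (α := ℝ)
    letI := Matrix.linftyOpNormedAlgebra (n := Fin m) (α := ℝ) (R := ℝ)
    exact NormedSpace.expSeries_summable' B
  set f : ℕ → ℝ := fun n => ((n.factorial : ℝ))⁻¹ * Matrix.trace (B ^ n) with hf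
  have hclm : ∃ L : Matrix (Fin m) (Fin m) ℝ →L[ℝ] ℝ, ∀ A, L A = Matrix.trace A :=
    ⟨LinearMap.toContinuousLinearMap (Matrix.traceLinearMap (Fin m) ℝ ℝ), fun A => rfl⟩
  obtain ⟨L, hL⟩ := hclm
  have htr : HasSum f (Matrix.trace (NormedSpace.exp B)) := by
    have h1 : HasSum (fun n : ℕ => L (((n.factorial : ℝ))⁻¹ • B ^ n))
        (L (∑' n : ℕ, ((n.factorial : ℝ))⁻¹ • B ^ n)) := hsum.hasSum.mapL L
    have h2 : NormedSpace.exp B = ∑' n : ℕ, ((n.factorial : ℝ))⁻¹ • B ^ n := by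
      rw [NormedSpace.exp_eq_tsum ℝ]
    rw [h2, ← hL]
    convert h1 using 2 with n
    simp [hf, hL, Matrix.trace_smul, smul_eq_mul]
  have hf0 : f 0 = (m : ℝ) := by simp [hf, Matrix.trace_one]
  have hfnonneg : ∀ n, 0 ≤ f n := fun n =>
    mul_nonneg (by positivity) (Finset.sum_nonneg fun i _ => pow_entry_nonneg B hB n i i)
  constructor
  · intro hnc
    have hfz : ∀ n, n ≠ 0 → f n = 0 := by
      intro n hn
      have htrz : Matrix.trace (B ^ n) = 0 := by
        by_contra hne
        have hpos : 0 < Matrix.trace (B ^ n) :=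
          lt_of_le_of_ne (Finset.sum_nonneg fun i _ => pow_entry_nonneg B hB n i i)
            (Ne.symm hne)
        obtain ⟨i, -, hi⟩ := Finset.exists_lt_of_sum_lt (f := fun _ => (0:ℝ))
          (by simpa [Matrix.trace, Matrix.diag] using hpos)
        obtain ⟨v, hv0, hvn, hvstep⟩ := walk_of_pow_pos B hB n i i hi
        exact hnc ⟨n, v, Nat.one_le_iff_ne_zero.mpr hn, by rw [hv0, hvn], hvstep⟩
      simp [hf, htrz]
    rw [← htr.tsum_eq, tsum_eq_single 0 (fun n hn => hfz n hn), hf0]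
  · intro htrace
    rintro ⟨k, v, hk, hvk, hvstep⟩
    have hfk : 0 < f k := by
      have := pow_pos_of_walk B hB k v hvstep
      rw [hvk] at this
      have htrk : 0 < Matrix.trace (B ^ k) := by
        calc (0:ℝ) < (B ^ k) (v 0) (v 0) := this
          _ ≤ ∑ i, (B ^ k) i i :=
            Finset.single_le_sum (f := fun i => (B ^ k) i i)
              (fun i _ => pow_entry_nonneg B hB k i i) (Finset.mem_univ _)
      exact mul_pos (by positivity) htrk
    have hle : f 0 + f k ≤ Matrix.trace (NormedSpace.exp B) := by
      have : ∑ n ∈ ({0, k} : Finset ℕ), f n ≤ Matrix.trace (NormedSpace.exp B) :=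
        sum_le_hasSum _ (fun n _ => hfnonneg n) htr
      rwa [Finset.sum_pair (by omega : (0:ℕ) ≠ k)] at this
    rw [htrace, hf0] at hle
    linarith
end
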